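/- Let ρ ≥ 2, let v : Fin (ρ−1) → (Fin ρ → ℝ) be a linearly independent family, let h : Fin ρ → ℝ not lie in the linear span of the v i, and let w : (Fin ρ → ℝ) →ₗ[ℝ] ℝ be a linear functional with w (v i) > 0 for all i. Fix δ₀ > 0 such that w ((∑ i, v i) + δ₀ • h) > 0. For δ ∈ (0, δ₀], let K_δ be the set of all vectors of the form (∑ i, (c i) • v i) + t • ((∑ i, v i) + δ • h) with c i ≥ 0 for all i and t ≥ 0. Then the Lebesgue integral ∫_{K_δ} exp(−w y) dy tends to 0 as δ → 0 from the right; in particular, for every ε > 0 there exists δ ∈ (0, δ₀] with ∫_{K_δ} exp(−w y) dy ≤ ε. -/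

import Mathlib

open MeasureTheory Filter

set_option maxHeartbeats 1000000 in
theorem stmt_10 (ρ : ℕ) (hρ : 2 ≤ ρ) (v : Fin (ρ - 1) → (Fin ρ → ℝ))
    (hv : LinearIndependent ℝ v)
    (h : Fin ρ → ℝ) (hh : h ∉ Submodule.span ℝ (Set.range v))
    (w : (Fin ρ → ℝ) →ₗ[ℝ] ℝ) (hw : ∀ i, 0 < w (v i))
    (δ₀ : ℝ) (hδ₀ : 0 < δ₀) (hwδ : 0 < w ((∑ i, v i) + δ₀ • h))
    (Kδ : ℝ → Set (Fin ρ → ℝ))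
    (hKδ : ∀ δ, Kδ δ = {y | ∃ c : Fin (ρ - 1) → ℝ, ∃ t : ℝ,
      (∀ i, 0 ≤ c i) ∧ 0 ≤ t ∧ y = (∑ i, c i • v i) + t • ((∑ i, v i) + δ • h)}) :
    Tendsto (fun δ : ℝ => ∫ y in Kδ δ, Real.exp (-(w y)))
      (nhdsWithin 0 (Set.Ioc 0 δ₀)) (nhds 0) ∧
    ∀ ε > (0 : ℝ), ∃ δ ∈ Set.Ioc (0 : ℝ) δ₀,
      (∫ y in Kδ δ, Real.exp (-(w y))) ≤ ε := by
  obtain ⟨n, rfl⟩ : ∃ n, ρ = n + 1 + 1 := ⟨ρ - 2, by omega⟩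
  clear hρ
  have hv' : LinearIndependent ℝ (v : Fin (n+1) → (Fin (n+1+1) → ℝ)) := hv
  have hh' : h ∉ Submodule.span ℝ (Set.range (v : Fin (n+1) → (Fin (n+1+1) → ℝ))) := hh
  have hw' : ∀ i : Fin (n+1), 0 < w (v i) := hw
  have hwδ' : 0 < w ((∑ i : Fin (n+1), v i) + δ₀ • h) := hwδ
  have hKδ' : ∀ δ : ℝ, Kδ δ = {y | ∃ c : Fin (n+1) → ℝ, ∃ t : ℝ,
      (∀ i, 0 ≤ c i) ∧ 0 ≤ t ∧ y = (∑ i : Fin (n+1), c i • v i) + t • ((∑ i : Fin (n+1), v i) + δ • h)} := hKδ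
  clear hv hh hw hwδ hKδ
  rename' hv' => hv, hh' => hh, hw' => hw, hwδ' => hwδ, hKδ' => hKδ
  set F := nhdsWithin (0:ℝ) (Set.Ioc 0 δ₀) with hF
  set f : (Fin (n+1+1) → ℝ) → ℝ := fun y => Real.exp (-(w y)) with hfdef
  have hfpos : ∀ y, 0 < f y := fun y => Real.exp_pos _
  have hfcont : Continuous f :=
    Real.continuous_exp.comp (w.continuous_of_finiteDimensional.neg)
  -- the one-parameter family of generating vectors
  set u : ℝ → Fin (n+1+1) → (Fin (n+1+1) → ℝ) :=
    fun δ => Fin.snoc v ((∑ i : Fin (n+1), v i) + δ • h) with hu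
  have hsmem : (∑ i : Fin (n+1), v i) ∈ Submodule.span ℝ (Set.range v) :=
    Submodule.sum_mem _ fun i _ => Submodule.subset_span ⟨i, rfl⟩
  have hLI : ∀ δ : ℝ, δ ≠ 0 → LinearIndependent ℝ (u δ) := by
    intro δ hδ
    refine linearIndependent_fin_snoc.mpr ⟨hv, fun hmem => hh ?_⟩
    have : δ • h ∈ Submodule.span ℝ (Set.range v) := by
      have := Submodule.sub_mem _ hmem hsmem
      simpa using this
    simpa [hδ] using Submodule.smul_mem _ δ⁻¹ this
  have hcard : Fintype.card (Fin (n+1+1)) = Module.finrank ℝ (Fin (n+1+1) → ℝ) := by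
    simp
  set B : ∀ δ : ℝ, δ ≠ 0 → Module.Basis (Fin (n+1+1)) ℝ (Fin (n+1+1) → ℝ) :=
    fun δ hδ => basisOfLinearIndependentOfCardEqFinrank (hLI δ hδ) hcard with hB
  have hBcoe : ∀ δ (hδ : δ ≠ 0), ⇑(B δ hδ) = u δ :=
    fun δ hδ => coe_basisOfLinearIndependentOfCardEqFinrank _ _
  set O : Set (Fin (n+1+1) → ℝ) := {x | ∀ i, 0 ≤ x i} with hO
  have hOclosed : IsClosed O := by
    have : O = ⋂ i, {x : Fin (n+1+1) → ℝ | 0 ≤ x i} := by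
      ext x; simp [hO]
    rw [this]
    exact isClosed_iInter fun i => isClosed_le continuous_const (continuous_apply i)
  have hOmeas : MeasurableSet O := hOclosed.measurableSet
  -- decomposition formula
  have hrep : ∀ (δ : ℝ) (hδ : δ ≠ 0) (c : Fin (n+1) → ℝ) (t : ℝ),
      (∑ i : Fin (n+1), c i • v i) + t • ((∑ i : Fin (n+1), v i) + δ • h)
        = (B δ hδ).equivFun.symm (Fin.snoc c t) := by
    intro δ hδ c t
    rw [Module.Basis.equivFun_symm_apply]
    conv_rhs => rw [Fin.sum_univ_castSucc]
    simp only [hBcoe δ hδ, hu, Fin.snoc_castSucc, Fin.snoc_last]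
  have hKeq : ∀ (δ : ℝ) (hδ : δ ≠ 0), Kδ δ = (B δ hδ).equivFun.symm '' O := by
    intro δ hδ
    rw [hKδ]
    ext y
    constructor
    · rintro ⟨c, t, hc, ht, rfl⟩
      refine ⟨Fin.snoc c t, fun i => ?_, (hrep δ hδ c t).symm⟩
      refine Fin.lastCases ?_ ?_ i
      · simpa using ht
      · intro j; simpa using hc j
    · rintro ⟨x, hx, rfl⟩
      refine ⟨fun i => x i.castSucc, x (Fin.last _), fun i => hx _, hx _, ?_⟩
      rw [hrep δ hδ _ _]
      congr 1
      exact (Fin.snoc_init_self x).symm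
  have hKclosed : ∀ (δ : ℝ), δ ≠ 0 → IsClosed (Kδ δ) := by
    intro δ hδ
    rw [hKeq δ hδ]
    have : ⇑((B δ hδ).equivFun.symm)
        = ⇑((B δ hδ).equivFun.symm).toContinuousLinearEquiv.toHomeomorph := by
      rw [ContinuousLinearEquiv.coe_toHomeomorph,
        LinearEquiv.coe_toContinuousLinearEquiv']
    rw [this]
    exact (Homeomorph.isClosedMap _) _ hOclosed
  have hmeas : ∀ δ ∈ Set.Ioc (0:ℝ) δ₀, MeasurableSet (Kδ δ) :=
    fun δ hδ => (hKclosed δ hδ.1.ne').measurableSet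
  -- integrability of the dominating function
  have hInt : IntegrableOn f (Kδ δ₀) := by
    have hδ0 : (δ₀:ℝ) ≠ 0 := hδ₀.ne'
    rw [hKeq δ₀ hδ0]
    set e := (B δ₀ hδ0).equivFun.symm with he
    set E := LinearMap.toContinuousLinearMap (e.toLinearMap) with hE
    have hder : ∀ x ∈ O, HasFDerivWithinAt ⇑e E O x := fun x _ =>
      E.hasFDerivAt.hasFDerivWithinAt
    rw [integrableOn_image_iff_integrableOn_abs_det_fderiv_smul volume hOmeas hder
      e.injective.injOn]
    set a : Fin (n+1+1) → ℝ := fun i => w (u δ₀ i) with ha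
    have hapos : ∀ i, 0 < a i := by
      intro i
      refine Fin.lastCases ?_ ?_ i
      · simpa [ha, hu, Fin.snoc_last] using hwδ
      · intro j; simpa [ha, hu, Fin.snoc_castSucc] using hw j
    have hwe : ∀ x : Fin (n+1+1) → ℝ, w (e x) = ∑ i, a i * x i := by
      intro x
      rw [he, Module.Basis.equivFun_symm_apply, map_sum]
      refine Finset.sum_congr rfl fun i _ => ?_
      rw [hBcoe δ₀ hδ0, LinearMap.map_smul, smul_eq_mul, mul_comm, ha]
    have key : IntegrableOn (fun x => ∏ i, Real.exp (-(a i * x i))) O := by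
      rw [← integrable_indicator_iff hOmeas]
      have heq : O.indicator (fun x => ∏ i, Real.exp (-(a i * x i)))
          = fun x => ∏ i, Set.indicator (Set.Ici 0)
              (fun s => Real.exp (-(a i * s))) (x i) := by
        funext x
        by_cases hx : x ∈ O
        · rw [Set.indicator_of_mem hx]
          exact Finset.prod_congr rfl fun i _ =>
            (Set.indicator_of_mem (show x i ∈ Set.Ici 0 from hx i)
              (fun s => Real.exp (-(a i * s)))).symm
        · rw [Set.indicator_of_notMem hx]
          obtain ⟨i, hi⟩ := not_forall.mp hx
          exact (Finset.prod_eq_zero (Finset.mem_univ i)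
            (Set.indicator_of_notMem (show x i ∉ Set.Ici 0 from hi)
              (fun s => Real.exp (-(a i * s))))).symm
      rw [heq]
      refine Integrable.fintype_prod fun i => ?_
      have h1 : IntegrableOn (fun s : ℝ => Real.exp (-(a i * s))) (Set.Ioi 0) := by
        have := exp_neg_integrableOn_Ioi 0 (hapos i)
        simpa only [neg_mul] using this
      exact (integrable_indicator_iff measurableSet_Ici).mpr
        ((integrableOn_Ici_iff_integrableOn_Ioi).mpr h1)
    have hfin : (fun x : Fin (n+1+1) → ℝ => |E.det| • f (e x))
        = fun x => |E.det| • ∏ i, Real.exp (-(a i * x i)) := by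
      funext x
      have : f (e x) = ∏ i, Real.exp (-(a i * x i)) := by
        show Real.exp (-(w (e x))) = _
        rw [hwe, ← Finset.sum_neg_distrib, Real.exp_sum]
      rw [this]
    rw [hfin]
    exact Integrable.smul |E.det| key
  -- monotonicity
  have hsub : ∀ δ ∈ Set.Ioc (0:ℝ) δ₀, Kδ δ ⊆ Kδ δ₀ := by
    rintro δ ⟨hδpos, hδle⟩ y hy
    rw [hKδ] at hy ⊢
    obtain ⟨c, t, hc, ht, rfl⟩ := hy
    have hδ₀ne : δ₀ ≠ 0 := hδ₀.ne'
    have h1 : t * δ / δ₀ ≤ t := by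
      rw [div_le_iff₀ hδ₀]
      calc t * δ ≤ t * δ₀ := mul_le_mul_of_nonneg_left hδle ht
        _ = t * δ₀ := rfl
    have h2 : 0 ≤ t * δ / δ₀ := by positivity
    refine ⟨fun i => c i + (t - t * δ / δ₀), t * δ / δ₀, fun i => ?_, h2, ?_⟩
    · have := hc i; linarith
    · rw [Finset.sum_congr rfl fun i _ => add_smul (c i) (t - t * δ / δ₀) (v i),
        Finset.sum_add_distrib, ← Finset.smul_sum, smul_add, smul_add, smul_smul,
        smul_smul, div_mul_cancel₀ _ hδ₀ne, sub_smul]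
      abel
  -- almost-everywhere pointwise convergence of indicators
  have hae : ∀ᵐ y : Fin (n+1+1) → ℝ,
      Tendsto (fun δ => Set.indicator (Kδ δ) f y) F (nhds 0) := by
    have hLIh : LinearIndependent ℝ (Fin.snoc v h : Fin (n+1+1) → _) :=
      linearIndependent_fin_snoc.mpr ⟨hv, hh⟩
    set Bh : Module.Basis (Fin (n+1+1)) ℝ (Fin (n+1+1) → ℝ) :=
      basisOfLinearIndependentOfCardEqFinrank hLIh hcard with hBh
    have hBhcoe : ⇑Bh = Fin.snoc v h := coe_basisOfLinearIndependentOfCardEqFinrank _ _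
    have hnull : volume {y : Fin (n+1+1) → ℝ | Bh.equivFun y (Fin.last (n+1)) = 0} = 0 := by
      have hker : {y : Fin (n+1+1) → ℝ | Bh.equivFun y (Fin.last (n+1)) = 0}
          = (LinearMap.ker ((LinearMap.proj (Fin.last (n+1))).comp
              (Bh.equivFun : (Fin (n+1+1) → ℝ) →ₗ[ℝ] (Fin (n+1+1) → ℝ))) : Set _) := by
        ext z
        simp [LinearMap.mem_ker]
      rw [hker]
      refine Measure.addHaar_submodule _ _ (fun hTop => ?_)
      have h1 : Bh (Fin.last (n+1)) ∈ LinearMap.ker ((LinearMap.proj (Fin.last (n+1))).comp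
          (Bh.equivFun : (Fin (n+1+1) → ℝ) →ₗ[ℝ] (Fin (n+1+1) → ℝ))) := by
        rw [hTop]; trivial
      simp [LinearMap.mem_ker, Module.Basis.equivFun_self] at h1
    have hmem2 : ∀ (δ : ℝ) (c : Fin (n+1) → ℝ) (t : ℝ),
        Bh.equivFun ((∑ i : Fin (n+1), c i • v i) + t • ((∑ i : Fin (n+1), v i) + δ • h))
          = Fin.snoc (fun i => c i + t) (t * δ) := by
      intro δ c t
      have hsum : (∑ i : Fin (n+1), c i • v i) + t • ((∑ i : Fin (n+1), v i) + δ • h)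
          = Bh.equivFun.symm (Fin.snoc (fun i => c i + t) (t * δ)) := by
        rw [Module.Basis.equivFun_symm_apply]
        conv_rhs => rw [Fin.sum_univ_castSucc]
        simp only [hBhcoe, Fin.snoc_castSucc, Fin.snoc_last]
        rw [Finset.sum_congr rfl fun i _ => add_smul (c i) t (v i),
          Finset.sum_add_distrib, ← Finset.smul_sum, smul_add, smul_smul]
        abel
      rw [hsum, LinearEquiv.apply_symm_apply]
    filter_upwards [measure_eq_zero_iff_ae_notMem.mp hnull] with y hy
    set α := Bh.equivFun y (Fin.last (n+1)) with hαdef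
    have hαne : α ≠ 0 := hy
    set q := Bh.equivFun y (Fin.castSucc 0) with hqdef
    set δ₁ := if 0 < α then α / max q 1 else 1 with hδ₁def
    have hmax : (0:ℝ) < max q 1 := lt_max_of_lt_right one_pos
    have hδ₁pos : 0 < δ₁ := by
      rw [hδ₁def]; split
      · exact div_pos ‹0 < α› hmax
      · exact one_pos
    have hout : ∀ δ : ℝ, 0 < δ → δ < δ₁ → y ∉ Kδ δ := by
      intro δ hδpos hδlt hyK
      rw [hKδ] at hyK
      obtain ⟨c, t, hc, ht, hyeq⟩ := hyK
      have hrep2 : Bh.equivFun y = Fin.snoc (fun i => c i + t) (t * δ) := by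
        rw [hyeq, hmem2]
      have hα2 : α = t * δ := by rw [hαdef, hrep2, Fin.snoc_last]
      have hq2 : q = c 0 + t := by rw [hqdef, hrep2, Fin.snoc_castSucc]
      have hαpos : 0 < α := lt_of_le_of_ne (by rw [hα2]; positivity) (Ne.symm hαne)
      have hδ₁eq : δ₁ = α / max q 1 := by rw [hδ₁def, if_pos hαpos]
      have htpos : 0 < t := by nlinarith
      have h5 : max q 1 < t := by
        have hlt2 : δ * max q 1 < α := by
          calc δ * max q 1 < δ₁ * max q 1 := by nlinarith
            _ = α := by rw [hδ₁eq, div_mul_cancel₀ _ hmax.ne']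
        nlinarith
      have h6 : t ≤ q := by have := hc 0; linarith
      have := le_max_left q 1
      linarith
    have hev : (fun δ => Set.indicator (Kδ δ) f y) =ᶠ[F] fun _ => (0:ℝ) := by
      have h2 : ∀ᶠ δ in F, δ < δ₁ :=
        eventually_nhdsWithin_of_eventually_nhds (tendsto_id.eventually_lt_const hδ₁pos)
      filter_upwards [h2, eventually_mem_nhdsWithin] with δ hlt hmem'
      exact Set.indicator_of_notMem (hout δ hmem'.1 hlt) f
    exact Tendsto.congr' hev.symm tendsto_const_nhds
  have hFmeas : ∀ᶠ δ in F, AEStronglyMeasurable (Set.indicator (Kδ δ) f) volume := by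
    filter_upwards [eventually_mem_nhdsWithin] with δ hδ
    exact hfcont.aestronglyMeasurable.indicator (hmeas δ hδ)
  have hbound : ∀ᶠ δ in F, ∀ᵐ y : Fin (n+1+1) → ℝ,
      ‖Set.indicator (Kδ δ) f y‖ ≤ Set.indicator (Kδ δ₀) f y := by
    filter_upwards [eventually_mem_nhdsWithin] with δ hδ
    refine Eventually.of_forall fun y => ?_
    rw [Real.norm_eq_abs, abs_of_nonneg (Set.indicator_nonneg (fun y _ => (hfpos y).le) y)]
    exact Set.indicator_le_indicator_of_subset (hsub δ hδ) (fun y => (hfpos y).le) y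
  have hbint : Integrable (Set.indicator (Kδ δ₀) f) volume :=
    (integrable_indicator_iff (hmeas δ₀ ⟨hδ₀, le_refl _⟩)).mpr hInt
  have main : Tendsto (fun δ => ∫ y, Set.indicator (Kδ δ) f y) F (nhds 0) := by
    have := tendsto_integral_filter_of_dominated_convergence (μ := volume)
      (F := fun δ => Set.indicator (Kδ δ) f) (f := fun _ => (0:ℝ))
      (Set.indicator (Kδ δ₀) f) hFmeas hbound hbint (by simpa using hae)
    simpa using this
  have main2 : Tendsto (fun δ : ℝ => ∫ y in Kδ δ, f y) F (nhds 0) := by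
    refine main.congr' ?_
    filter_upwards [eventually_mem_nhdsWithin] with δ hδ
    exact integral_indicator (hmeas δ hδ)
  refine ⟨main2, fun ε hε => ?_⟩
  have hNB : (nhdsWithin (0:ℝ) (Set.Ioc 0 δ₀)).NeBot := by
    refine mem_closure_iff_nhdsWithin_neBot.mp ?_
    rw [closure_Ioc hδ₀.ne]
    exact ⟨le_refl _, hδ₀.le⟩
  have h1 : ∀ᶠ δ in F, (∫ y in Kδ δ, f y) < ε := main2.eventually_lt_const hε
  obtain ⟨δ, hδ1, hδ2⟩ := (h1.and eventually_mem_nhdsWithin).exists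
  exact ⟨δ, hδ2, hδ1.le⟩
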